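/- The Gaussian moment identity holds: γ_0(z) := ∫_ℝ ∫_{|e_z| > √(2W(z)/m)} exp(−m(v_x² + e_z²)/(2kT)) |e_z| σ_z(z,e_z) de_z dv_x = (2kπT/m)·exp(−W(z)/(kT)), where σ_z(z,e_z) = (e_z² − (2/m)W(z))^{−1/2}. -/

import Mathlib

open MeasureTheory Set

lemma phi_image (c : ℝ) (hc : 0 ≤ c) :
    (fun u : ℝ => Real.sqrt (u ^ 2 + c)) '' Ioi 0 = Ioi (Real.sqrt c) := by
  ext y
  constructor
  · rintro ⟨u, hu, rfl⟩
    exact Real.sqrt_lt_sqrt hc (by simp only [mem_Ioi] at hu; nlinarith)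
  · intro hy
    simp only [mem_Ioi] at hy
    have hy0 : 0 < y := lt_of_le_of_lt (Real.sqrt_nonneg c) hy
    have hcy : c < y ^ 2 := by
      have := Real.sq_sqrt hc
      nlinarith [Real.sqrt_nonneg c]
    refine ⟨Real.sqrt (y ^ 2 - c), ?_, ?_⟩
    · exact Real.sqrt_pos.mpr (by linarith)
    · show Real.sqrt (Real.sqrt (y ^ 2 - c) ^ 2 + c) = y
      rw [Real.sq_sqrt (by linarith : (0:ℝ) ≤ y ^ 2 - c),
        sub_add_cancel, Real.sqrt_sq hy0.le]

lemma phi_deriv (c : ℝ) (hc : 0 ≤ c) {u : ℝ} (hu : u ∈ Ioi (0:ℝ)) :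
    HasDerivWithinAt (fun u : ℝ => Real.sqrt (u ^ 2 + c))
      (u / Real.sqrt (u ^ 2 + c)) (Ioi 0) u := by
  simp only [mem_Ioi] at hu
  have hpos : (0:ℝ) < u ^ 2 + c := by nlinarith
  have h1 : HasDerivAt (fun u : ℝ => u ^ 2 + c) (2 * u) u := by
    simpa using (hasDerivAt_pow 2 u).add_const c
  have h2 := (Real.hasDerivAt_sqrt hpos.ne').comp u h1
  have hs : Real.sqrt (u ^ 2 + c) ≠ 0 := Real.sqrt_ne_zero'.mpr hpos
  have : 1 / (2 * Real.sqrt (u ^ 2 + c)) * (2 * u) = u / Real.sqrt (u ^ 2 + c) := by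
    field_simp
  rw [this] at h2
  exact h2.hasDerivWithinAt

lemma phi_inj (c : ℝ) (hc : 0 ≤ c) : InjOn (fun u : ℝ => Real.sqrt (u ^ 2 + c)) (Ioi 0) := by
  intro u hu v hv h
  simp only [mem_Ioi] at hu hv
  simp only at h
  rw [Real.sqrt_inj (by nlinarith) (by nlinarith)] at h
  nlinarith

lemma transformed_eq (b c : ℝ) (hc : 0 ≤ c) {u : ℝ} (hu : u ∈ Ioi (0:ℝ)) :
    |u / Real.sqrt (u ^ 2 + c)| •
      (Real.exp (-b * Real.sqrt (u ^ 2 + c) ^ 2) * |Real.sqrt (u ^ 2 + c)| *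
        (Real.sqrt (Real.sqrt (u ^ 2 + c) ^ 2 - c))⁻¹)
    = Real.exp (-b * c) * Real.exp (-b * u ^ 2) := by
  simp only [mem_Ioi] at hu
  have hpos : (0:ℝ) < u ^ 2 + c := by nlinarith
  have hsq : Real.sqrt (u ^ 2 + c) ^ 2 = u ^ 2 + c := Real.sq_sqrt hpos.le
  have hs0 : Real.sqrt (u ^ 2 + c) ≠ 0 := Real.sqrt_ne_zero'.mpr hpos
  rw [hsq, smul_eq_mul, abs_div, abs_of_pos hu,
    abs_of_nonneg (Real.sqrt_nonneg _), add_sub_cancel_right,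
    Real.sqrt_sq hu.le, ← Real.exp_add]
  field_simp
  ring_nf

lemma integral_Ioi_part (b c : ℝ) (hb : 0 < b) (hc : 0 ≤ c) :
    (∫ e in Ioi (Real.sqrt c),
        Real.exp (-b * e ^ 2) * |e| * (Real.sqrt (e ^ 2 - c))⁻¹)
      = Real.exp (-b * c) * (Real.sqrt (Real.pi / b) / 2) := by
  rw [← phi_image c hc,
    integral_image_eq_integral_abs_deriv_smul measurableSet_Ioi
      (fun u hu => phi_deriv c hc hu) (phi_inj c hc)]
  rw [setIntegral_congr_fun measurableSet_Ioi
    (fun u hu => transformed_eq b c hc hu)]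
  rw [integral_const_mul, integral_gaussian_Ioi]

lemma integrableOn_Ioi_part (b c : ℝ) (hb : 0 < b) (hc : 0 ≤ c) :
    IntegrableOn (fun e => Real.exp (-b * e ^ 2) * |e| * (Real.sqrt (e ^ 2 - c))⁻¹)
      (Ioi (Real.sqrt c)) := by
  rw [← phi_image c hc,
    integrableOn_image_iff_integrableOn_abs_deriv_smul measurableSet_Ioi
      (fun u hu => phi_deriv c hc hu) (phi_inj c hc)]
  apply (Integrable.integrableOn
    (((integrable_exp_neg_mul_sq hb).const_mul (Real.exp (-b * c))))).congr_fun
    (fun u hu => (transformed_eq b c hc hu).symm) measurableSet_Ioi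

lemma set_eq (c : ℝ) (hc : 0 ≤ c) :
    {e : ℝ | c < e ^ 2} = Iio (-Real.sqrt c) ∪ Ioi (Real.sqrt c) := by
  ext e
  simp only [mem_setOf_eq, mem_union, mem_Iio, mem_Ioi]
  constructor
  · intro h
    have : Real.sqrt c < |e| := by
      calc Real.sqrt c < Real.sqrt (e ^ 2) := Real.sqrt_lt_sqrt hc h
        _ = |e| := Real.sqrt_sq_eq_abs e
    rcases lt_abs.mp this with h' | h'
    · right; exact h'
    · left; linarith
  · have h1 := Real.sq_sqrt hc
    have h2 := Real.sqrt_nonneg c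
    rintro (h | h) <;> nlinarith

lemma inner_val (b c : ℝ) (hb : 0 < b) (hc : 0 ≤ c) :
    (∫ e in {e : ℝ | c < e ^ 2},
        Real.exp (-b * e ^ 2) * |e| * (Real.sqrt (e ^ 2 - c))⁻¹)
      = Real.exp (-b * c) * Real.sqrt (Real.pi / b) := by
  set g : ℝ → ℝ := fun e => Real.exp (-b * e ^ 2) * |e| * (Real.sqrt (e ^ 2 - c))⁻¹ with hg
  have geven : ∀ x : ℝ, g (-x) = g x := fun x => by simp [hg, neg_sq]
  have hIoi : IntegrableOn g (Ioi (Real.sqrt c)) := integrableOn_Ioi_part b c hb hc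
  have hIio : IntegrableOn g (Iio (-Real.sqrt c)) := by
    have := ((Measure.measurePreserving_neg (volume : Measure ℝ)).integrableOn_comp_preimage
      (Homeomorph.neg ℝ).measurableEmbedding).mpr hIoi
    simpa [Function.comp_def, geven, neg_preimage, neg_Ioi] using this
  have hIioval : (∫ e in Iio (-Real.sqrt c), g e) = ∫ e in Ioi (Real.sqrt c), g e := by
    rw [← integral_Iic_eq_integral_Iio]
    have := integral_comp_neg_Iic (-Real.sqrt c) g
    rw [neg_neg] at this
    rw [← this]
    simp only [geven]
  rw [set_eq c hc, setIntegral_union (by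
      apply disjoint_left.mpr
      intro x hx hx'
      simp only [mem_Iio, mem_Ioi] at hx hx'
      have := Real.sqrt_nonneg c
      linarith) measurableSet_Ioi hIio hIoi,
    hIioval, integral_Ioi_part b c hb hc]
  ring

/-- Gaussian moment identity:
`γ₀(z) = ∫_ℝ ∫_{e²>2W(z)/m} exp(−m(vx²+e²)/(2kT)) |e| (e²−(2/m)W(z))^{-1/2} de dvx
       = (2kπT/m)·exp(−W(z)/(kT))`, where `w = W(z) ≥ 0`. -/
theorem stmt2 (m k T w : ℝ) (hm : 0 < m) (hk : 0 < k) (hT : 0 < T) (hw : 0 ≤ w) :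
    (∫ vx : ℝ, ∫ e in {e : ℝ | 2 / m * w < e ^ 2},
        Real.exp (-(m * (vx ^ 2 + e ^ 2)) / (2 * k * T)) * |e| *
          (Real.sqrt (e ^ 2 - 2 / m * w))⁻¹) =
      2 * k * Real.pi * T / m * Real.exp (-(w / (k * T))) := by
  set b : ℝ := m / (2 * k * T) with hbdef
  set c : ℝ := 2 / m * w with hcdef
  have hb : 0 < b := by positivity
  have hc : 0 ≤ c := by positivity
  have key : ∀ vx : ℝ,
      (∫ e in {e : ℝ | c < e ^ 2},
          Real.exp (-(m * (vx ^ 2 + e ^ 2)) / (2 * k * T)) * |e| *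
            (Real.sqrt (e ^ 2 - c))⁻¹)
        = Real.exp (-b * vx ^ 2) * (Real.exp (-b * c) * Real.sqrt (Real.pi / b)) := by
    intro vx
    rw [← inner_val b c hb hc, ← integral_const_mul]
    apply integral_congr_ae
    filter_upwards with e
    have harg : -(m * (vx ^ 2 + e ^ 2)) / (2 * k * T) = -b * vx ^ 2 + -b * e ^ 2 := by
      rw [hbdef]; field_simp; ring
    rw [harg, Real.exp_add]; ring
  simp_rw [key]
  rw [integral_mul_const, integral_gaussian]
  rw [show Real.sqrt (Real.pi / b) * (Real.exp (-b * c) * Real.sqrt (Real.pi / b))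
      = Real.sqrt (Real.pi / b) * Real.sqrt (Real.pi / b) * Real.exp (-b * c) by ring,
    Real.mul_self_sqrt (by positivity)]
  have h1 : Real.pi / b = 2 * k * Real.pi * T / m := by
    rw [hbdef]; field_simp
  have h2 : -b * c = -(w / (k * T)) := by
    rw [hbdef, hcdef]; field_simp
  rw [h1, h2]
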